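/- Let $j_1,j_2$ be nonnegative integers with $j_1<j_2$. Then there is a unique nonnegative integer $m(j_2,j_1)$ such that $T^n_{j_1+1}\circ\cdots\circ T^n_{j_2}(y_{j_2})=T_{m(j_2,j_1)}(y_{j_2})$, and it satisfies $\|y_{j_1}\|-1\le m(j_2,j_1)\le\|y_{j_1}\|$. -/

import Mathlib

open Set

noncomputable section

variable {Γ : Type*} [TopologicalSpace Γ] [DiscreteTopology Γ]

/-- `ℓ∞(Γ)`: the Banach space of bounded real functions on `Γ`
(carrying the discrete topology, so that boundedness is the only constraint). -/
abbrev Linf (Γ : Type*) [TopologicalSpace Γ] [DiscreteTopology Γ] : Type _ :=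
  BoundedContinuousFunction Γ ℝ

/-- The entire part of a real number, toward `0`: `[r] = sign(r)⌊|r|⌋`. -/
def ent (r : ℝ) : ℝ := Real.sign r * ⌊|r|⌋

lemma abs_ent_le (r : ℝ) : |ent r| ≤ |r| := by
  have hsign : |Real.sign r| ≤ 1 := by
    rcases lt_trichotomy r 0 with h | h | h
    · rw [Real.sign_of_neg h]; norm_num
    · rw [h, Real.sign_zero]; norm_num
    · rw [Real.sign_of_pos h]; norm_num
  have hfl : |(⌊|r|⌋ : ℝ)| ≤ |r| := by
    rw [abs_of_nonneg (by exact_mod_cast Int.floor_nonneg.mpr (abs_nonneg r))]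
    exact Int.floor_le _
  calc |ent r| = |Real.sign r| * |(⌊|r|⌋ : ℝ)| := abs_mul _ _
    _ ≤ 1 * |r| := mul_le_mul hsign hfl (abs_nonneg _) zero_le_one
    _ = |r| := one_mul _

/-- The coordinatewise quantization `f : ℓ∞(S) → ℓ∞(S)`, `f(x)(γ) = [x(γ)]`. -/
def quant (x : Linf Γ) : Linf Γ :=
  BoundedContinuousFunction.ofNormedAddCommGroup (fun γ => ent (x γ))
    continuous_of_discreteTopology ‖x‖ (fun γ => by
      rw [Real.norm_eq_abs]
      exact (abs_ent_le (x γ)).trans (by simpa using x.norm_coe_le_norm γ))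

/-- Scalar truncation at level `s`. -/
def truncFun (s t : ℝ) : ℝ := if |t| ≤ s then t else s * t / |t|

lemma abs_truncFun_le (s t : ℝ) : |truncFun s t| ≤ max |s| |t| := by
  unfold truncFun
  split_ifs with h
  · exact le_max_right _ _
  · by_cases ht : t = 0
    · simp [ht]
    · have hst : abs (s * t / |t|) = |s| := by
        rw [abs_div, abs_mul, abs_abs, mul_div_assoc, div_self (abs_ne_zero.mpr ht), mul_one]
      rw [hst]; exact le_max_left _ _

/-- The truncation of radius `s`: `T_s(x)(γ) = x(γ)` if `|x(γ)| ≤ s`,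
and `= s·x(γ)/|x(γ)|` otherwise. -/
def trunc (s : ℝ) (x : Linf Γ) : Linf Γ :=
  BoundedContinuousFunction.ofNormedAddCommGroup (fun γ => truncFun s (x γ))
    continuous_of_discreteTopology (max |s| ‖x‖) (fun γ => by
      rw [Real.norm_eq_abs]
      exact (abs_truncFun_le s (x γ)).trans
        (max_le_max le_rfl (by simpa using x.norm_coe_le_norm γ)))

/-- The restriction operator `r_S : ℓ∞(Γ) → ℓ∞(S)`, where `ℓ∞(S)` is identified
isometrically with the subspace of `ℓ∞(Γ)` of functions vanishing off `S`. -/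
def restr (S : Set Γ) (x : Linf Γ) : Linf Γ :=
  BoundedContinuousFunction.ofNormedAddCommGroup (S.indicator x)
    continuous_of_discreteTopology ‖x‖ (fun γ => by
      rw [Real.norm_eq_abs]
      by_cases h : γ ∈ S
      · rw [Set.indicator_of_mem h]
        simpa using x.norm_coe_le_norm γ
      · rw [Set.indicator_of_notMem h]
        simp)

/-- The ball `s·B_{ℓ∞(S)}`, viewed inside `ℓ∞(Γ)`: functions supported on `S`
of norm at most `s`. -/
def suppBall (S : Set Γ) (s : ℝ) : Set (Linf Γ) :=
  {x | (∀ γ ∉ S, x γ = 0) ∧ ‖x‖ ≤ s}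

/-- `chain T a b = T (a+1) ∘ ⋯ ∘ T b` (the identity if `b ≤ a`). -/
def chain {α : Type*} (T : ℕ → α → α) (a b : ℕ) : α → α :=
  Nat.rec id (fun k ih => ih ∘ T (a + k + 1)) (b - a)

/-- Bourgain–Delbaen data on `Γ`: a strictly increasing sequence of nonempty finite
sets `Γs n` (for `n ≥ 1`) with union `Γ`, together with compatible bounded linear
extension operators `i n : ℓ∞(Γ_n) → ℓ∞(Γ)` (realized as operators on `ℓ∞(Γ)`
factoring through the restriction `restr (Γs n)`), with norms bounded by the
positive integer `lam`. -/
structure BD (Γ : Type*) [TopologicalSpace Γ] [DiscreteTopology Γ] where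
  Γs : ℕ → Set Γ
  lam : ℕ
  i : ℕ → Linf Γ →L[ℝ] Linf Γ
  one_le_lam : 1 ≤ lam
  finite : ∀ n, 1 ≤ n → (Γs n).Finite
  nonempty : ∀ n, 1 ≤ n → (Γs n).Nonempty
  ssubset : ∀ n, 1 ≤ n → Γs n ⊂ Γs (n + 1)
  iUnion_eq : ⋃ n ∈ {k : ℕ | 1 ≤ k}, Γs n = Set.univ
  extension : ∀ n, 1 ≤ n → ∀ x : Linf Γ, ∀ γ ∈ Γs n, i n x γ = x γ
  factor : ∀ n, 1 ≤ n → ∀ x : Linf Γ, i n (restr (Γs n) x) = i n x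
  compatible : ∀ n m, 1 ≤ n → n < m → ∀ x : Linf Γ, i m (restr (Γs m) (i n x)) = i n x
  norm_i_le : ∀ n, 1 ≤ n → ‖i n‖ ≤ (lam : ℝ)

namespace BD

/-- `s n = λ^n`. -/
def s (B : BD Γ) (n : ℕ) : ℝ := (B.lam : ℝ) ^ n

/-- The sets `M_n` (with `M_0 = ∅`):
`M_n = M_{n-1} ∪ (f ∘ i_n)(f(s_n B_{ℓ∞(Γ_n)}) \ r_n(M_{n-1}))`. -/
def M (B : BD Γ) : ℕ → Set (Linf Γ)
  | 0 => ∅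
  | n + 1 =>
      M B n ∪
        (fun z => quant (B.i (n + 1) z)) ''
          (quant '' suppBall (B.Γs (n + 1)) (B.s (n + 1)) \ restr (B.Γs (n + 1)) '' M B n)

/-- `M = ⋃ n, M_n`. -/
def Mtot (B : BD Γ) : Set (Linf Γ) := ⋃ n, B.M n

/-- `C_n = (f ∘ i_{n+1} ∘ f ∘ T_{s_{n+1}} ∘ r_{n+1} ∘ i_n)
(f(s_{n+1}B_{ℓ∞(Γ_n)}) \ f(s_n B_{ℓ∞(Γ_n)}))`. -/
def C (B : BD Γ) (n : ℕ) : Set (Linf Γ) :=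
  (fun z => quant (B.i (n + 1) (quant (trunc (B.s (n + 1)) (restr (B.Γs (n + 1)) (B.i n z)))))) ''
    (quant '' suppBall (B.Γs n) (B.s (n + 1)) \ quant '' suppBall (B.Γs n) (B.s n))

/-- `D_n = M_n ∪ C_n`. -/
def D (B : BD Γ) (n : ℕ) : Set (Linf Γ) := B.M n ∪ B.C n

end BD


section AuxLemmas

lemma ent_int (k : ℤ) : ent (k : ℝ) = k := by
  unfold ent
  rcases lt_trichotomy k 0 with h | h | h
  · have h' : (k:ℝ) < 0 := by exact_mod_cast h
    rw [Real.sign_of_neg h', abs_of_neg h']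
    rw [show (-(k:ℝ)) = ((-k : ℤ) : ℝ) by push_cast; ring, Int.floor_intCast]
    push_cast; ring
  · simp [h]
  · have h' : (0:ℝ) < k := by exact_mod_cast h
    rw [Real.sign_of_pos h', abs_of_pos h', Int.floor_intCast]
    simp

lemma ent_exists_int (r : ℝ) : ∃ k : ℤ, ent r = k := by
  unfold ent
  rcases lt_trichotomy r 0 with h | h | h
  · exact ⟨-⌊|r|⌋, by rw [Real.sign_of_neg h]; push_cast; ring⟩
  · exact ⟨0, by simp [h]⟩
  · exact ⟨⌊|r|⌋, by rw [Real.sign_of_pos h]; ring⟩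

lemma abs_truncFun_eq (s t : ℝ) (hs : 0 ≤ s) : |truncFun s t| = min s |t| := by
  unfold truncFun
  split_ifs with h
  · rw [min_eq_right h]
  · push_neg at h
    have ht : t ≠ 0 := by intro h0; simp [h0] at h; linarith
    have habs : abs (s * t / |t|) = s := by
      rw [abs_div, abs_mul, abs_abs, abs_of_nonneg hs, mul_div_assoc,
        div_self (abs_ne_zero.mpr ht), mul_one]
    rw [habs, min_eq_left (le_of_lt h)]

lemma truncFun_of_abs_le {s t : ℝ} (h : |t| ≤ s) : truncFun s t = t := if_pos h

lemma truncFun_truncFun (s t r : ℝ) (hs : 0 ≤ s) (ht : 0 ≤ t) :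
    truncFun s (truncFun t r) = truncFun (min s t) r := by
  by_cases h1 : |r| ≤ t
  · rw [show truncFun t r = r from if_pos h1]
    unfold truncFun
    by_cases h2 : |r| ≤ s
    · rw [if_pos h2, if_pos (le_min h2 h1)]
    · push_neg at h2
      rw [if_neg (not_le.mpr h2), if_neg (not_le.mpr (lt_of_le_of_lt (min_le_left s t) h2)),
        min_eq_left (le_trans (le_of_lt h2) h1)]
  · push_neg at h1
    have hr : r ≠ 0 := by intro h0; simp [h0] at h1; linarith
    have htr : truncFun t r = t * r / |r| := if_neg (not_le.mpr h1)
    have habs : |truncFun t r| = t := by rw [abs_truncFun_eq t r ht, min_eq_left (le_of_lt h1)]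
    by_cases h2 : t ≤ s
    · rw [show truncFun s (truncFun t r) = truncFun t r from if_pos (by rw [habs]; exact h2), htr,
        show truncFun (min s t) r = (min s t) * r / |r| from
          if_neg (not_le.mpr (lt_of_le_of_lt (min_le_right s t) h1)),
        min_eq_right h2]
    · push_neg at h2
      have ht0 : 0 < t := lt_of_le_of_lt hs h2
      rw [show truncFun s (truncFun t r) = s * truncFun t r / |truncFun t r| from
          if_neg (by rw [habs]; exact not_le.mpr h2), habs, htr,
        show truncFun (min s t) r = (min s t) * r / |r| from
          if_neg (not_le.mpr (lt_of_le_of_lt (min_le_left s t) (lt_trans h2 h1))),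
        min_eq_left (le_of_lt h2)]
      field_simp

lemma truncFun_int (s : ℕ) (k : ℤ) : ∃ k' : ℤ, truncFun (s:ℝ) (k:ℝ) = (k':ℝ) := by
  unfold truncFun
  split_ifs with h
  · exact ⟨k, rfl⟩
  · rcases eq_or_ne k 0 with rfl | hk
    · exact ⟨0, by simp⟩
    refine ⟨s * Int.sign k, ?_⟩
    rcases lt_trichotomy k 0 with hh | hh | hh
    · have h' : (k:ℝ) < 0 := by exact_mod_cast hh
      rw [abs_of_neg h', Int.sign_eq_neg_one_of_neg hh]
      rw [div_neg, mul_div_assoc, div_self (ne_of_lt h'), mul_one]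
      push_cast; ring
    · exact absurd hh hk
    · have h' : (0:ℝ) < k := by exact_mod_cast hh
      rw [abs_of_pos h', Int.sign_eq_one_of_pos hh, mul_div_assoc,
        div_self (ne_of_gt h'), mul_one]
      push_cast; ring

lemma trunc_apply (s : ℝ) (x : Linf Γ) (γ : Γ) : trunc s x γ = truncFun s (x γ) := rfl

lemma quant_apply (x : Linf Γ) (γ : Γ) : quant x γ = ent (x γ) := rfl

lemma trunc_trunc (s t : ℝ) (hs : 0 ≤ s) (ht : 0 ≤ t) (x : Linf Γ) :
    trunc s (trunc t x) = trunc (min s t) x := by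
  ext γ
  simp only [trunc_apply]
  exact truncFun_truncFun s t (x γ) hs ht

lemma trunc_of_norm_le {s : ℝ} {x : Linf Γ} (h : ‖x‖ ≤ s) : trunc s x = x := by
  ext γ
  rw [trunc_apply, truncFun_of_abs_le (le_trans (by simpa using x.norm_coe_le_norm γ) h)]

lemma exists_norm_attained {Δ : Type*} [TopologicalSpace Δ] [DiscreteTopology Δ]
    [Finite Δ] [Nonempty Δ] (x : Linf Δ) :
    ∃ γ₀, ‖x‖ = |x γ₀| ∧ ∀ γ, |x γ| ≤ |x γ₀| := by
  obtain ⟨γ₀, hγ₀⟩ := Finite.exists_max (fun γ => |x γ|)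
  refine ⟨γ₀, le_antisymm ?_ ?_, hγ₀⟩
  · exact (BoundedContinuousFunction.norm_le (abs_nonneg _)).mpr (fun γ => by
      rw [Real.norm_eq_abs]; exact hγ₀ γ)
  · simpa [Real.norm_eq_abs] using x.norm_coe_le_norm γ₀

lemma norm_trunc {Δ : Type*} [TopologicalSpace Δ] [DiscreteTopology Δ]
    [Finite Δ] [Nonempty Δ] (s : ℝ) (hs : 0 ≤ s) (x : Linf Δ) :
    ‖trunc s x‖ = min s ‖x‖ := by
  obtain ⟨γ₀, h1, h2⟩ := exists_norm_attained x
  obtain ⟨γ₁, g1, g2⟩ := exists_norm_attained (trunc s x)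
  rw [g1, trunc_apply, abs_truncFun_eq _ _ hs]
  apply le_antisymm
  · exact min_le_min le_rfl (by rw [h1]; exact h2 γ₁)
  · calc min s ‖x‖ = min s |x γ₀| := by rw [h1]
      _ = |truncFun s (x γ₀)| := (abs_truncFun_eq _ _ hs).symm
      _ = |trunc s x γ₀| := rfl
      _ ≤ |trunc s x γ₁| := g2 γ₀
      _ = min s |x γ₁| := by rw [trunc_apply, abs_truncFun_eq _ _ hs]

lemma chain_self {α : Type*} (T : ℕ → α → α) (a : ℕ) : chain T a a = id := by
  show Nat.rec id _ (a - a) = id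
  rw [Nat.sub_self]
  rfl

lemma chain_succ {α : Type*} (T : ℕ → α → α) (a b : ℕ) (h : a ≤ b) :
    chain T a (b + 1) = chain T a b ∘ T (b + 1) := by
  obtain ⟨n, rfl⟩ := Nat.exists_eq_add_of_le h
  show Nat.rec id _ (a + n + 1 - a) = Nat.rec id _ (a + n - a) ∘ T (a + n + 1)
  rw [show a + n + 1 - a = n + 1 by omega, show a + n - a = n by omega]

end AuxLemmas

/-- Lemma 8 (`bound`): for `j₁ < j₂` there is a unique nonnegative integer
`m(j₂,j₁)` with `T_{j₁+1} ∘ ⋯ ∘ T_{j₂}(y_{j₂}) = T_{m(j₂,j₁)}(y_{j₂})`, and it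
satisfies `‖y_{j₁}‖ - 1 ≤ m(j₂,j₁) ≤ ‖y_{j₁}‖`. -/
theorem m_exists_unique_and_bound
    {Δ : Type*} [TopologicalSpace Δ] [DiscreteTopology Δ] [Finite Δ] [Nonempty Δ]
    (y : ℕ → Linf Δ) (hy0 : y 0 = 0) (hyinj : Function.Injective y)
    (hyrange : Set.range y = Set.range (fun z : Linf Δ => quant z))
    (hymono : ∀ j₁ j₂, j₁ ≤ j₂ → ‖y j₁‖ ≤ ‖y j₂‖)
    (T : ℕ → Linf Δ → Linf Δ)
    (hT_val : ∀ j, 1 ≤ j → T j (y j) = trunc (‖y j‖ - 1) (y j))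
    (hT_id : ∀ j k, k < j → T j (y k) = y k)
    (j₁ j₂ : ℕ) (h12 : j₁ < j₂) :
    (∃! m : ℕ, chain T j₁ j₂ (y j₂) = trunc (m : ℝ) (y j₂)) ∧
    (∀ m : ℕ, chain T j₁ j₂ (y j₂) = trunc (m : ℝ) (y j₂) →
      ‖y j₁‖ - 1 ≤ (m : ℝ) ∧ (m : ℝ) ≤ ‖y j₁‖) := by
  classical
  have hint : ∀ j (γ : Δ), ∃ k : ℤ, y j γ = k := by
    intro j γ
    have hmem : y j ∈ Set.range (fun z : Linf Δ => quant z) := by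
      rw [← hyrange]; exact ⟨j, rfl⟩
    obtain ⟨z, hz⟩ := hmem
    rw [← hz]; exact ent_exists_int (z γ)
  have hmem : ∀ x : Linf Δ, (∀ γ, ∃ k : ℤ, x γ = k) → ∃ j, y j = x := by
    intro x hx
    have hq : quant x = x := by
      ext γ
      obtain ⟨k, hk⟩ := hx γ
      rw [quant_apply, hk, ent_int]
    have : x ∈ Set.range y := by rw [hyrange]; exact ⟨x, hq⟩
    exact this
  have hnormnat : ∀ j, ∃ n : ℕ, ‖y j‖ = (n:ℝ) := by
    intro j
    obtain ⟨γ₀, h1, _⟩ := exists_norm_attained (y j)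
    obtain ⟨k, hk⟩ := hint j γ₀
    refine ⟨k.natAbs, ?_⟩
    rw [h1, hk]
    simp [Nat.cast_natAbs]
  have hlt : ∀ k j, ‖y k‖ < ‖y j‖ → k < j := by
    intro k j h
    by_contra hc
    push_neg at hc
    exact absurd (hymono j k hc) (not_le.mpr h)
  have hne0 : ∀ j, 1 ≤ j → y j ≠ 0 := by
    intro j hj h
    have := hyinj (h.trans hy0.symm)
    omega
  have hpos : ∀ j, 1 ≤ j → (1:ℝ) ≤ ‖y j‖ := by
    intro j hj
    obtain ⟨n, hn⟩ := hnormnat j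
    have h0 : (0:ℝ) < ‖y j‖ := norm_pos_iff.mpr (hne0 j hj)
    rw [hn] at h0 ⊢
    have : 0 < n := by exact_mod_cast h0
    exact_mod_cast this
  have htruncy : ∀ j (m : ℕ), ∃ k, y k = trunc (m:ℝ) (y j) := by
    intro j m
    apply hmem
    intro γ
    obtain ⟨k, hk⟩ := hint j γ
    obtain ⟨k', hk'⟩ := truncFun_int m k
    exact ⟨k', by rw [trunc_apply, hk, hk']⟩
  have hstep : ∀ j, 1 ≤ j → ∀ n : ℕ, ‖y j‖ = (n:ℝ) → ∃ k, k < j ∧ T j (y j) = y k ∧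
      y k = trunc ((n-1 : ℕ):ℝ) (y j) ∧ ‖y k‖ = ((n-1:ℕ):ℝ) := by
    intro j hj n hn
    have hn1 : 1 ≤ n := by
      have := hpos j hj
      rw [hn] at this
      exact_mod_cast this
    have hcast : ‖y j‖ - 1 = ((n-1:ℕ):ℝ) := by
      rw [hn, Nat.cast_sub hn1, Nat.cast_one]
    obtain ⟨k, hk⟩ := htruncy j (n-1)
    have hTv : T j (y j) = y k := by rw [hT_val j hj, hcast, hk]
    have hnk : ‖y k‖ = ((n-1:ℕ):ℝ) := by
      rw [hk, norm_trunc _ (Nat.cast_nonneg _), hn,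
        min_eq_left (by exact_mod_cast Nat.sub_le n 1)]
    have hkj : k < j := by
      apply hlt
      rw [hnk, hn]
      exact_mod_cast Nat.sub_lt (by omega) one_pos
    exact ⟨k, hkj, hTv, hk, hnk⟩
  have MAIN : ∀ n a k, k ≤ a + n →
      ∃ k' : ℕ, ∃ m : ℕ, k' ≤ a ∧ chain T a (a+n) (y k) = y k' ∧
        y k' = trunc (m:ℝ) (y k) ∧ ‖y k'‖ = (m:ℝ) ∧
        (‖y a‖ - 1 ≤ (m:ℝ) ∨ k' = k) ∧ (k' = k ∨ (m:ℝ) ≤ ‖y k‖ - 1) := by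
    intro n
    induction n with
    | zero =>
      intro a k hk
      obtain ⟨m, hm⟩ := hnormnat k
      refine ⟨k, m, by omega, ?_, (trunc_of_norm_le (le_of_eq hm)).symm, hm,
        Or.inr rfl, Or.inl rfl⟩
      rw [Nat.add_zero, chain_self]
      rfl
    | succ n ih =>
      intro a k hk
      have hch : chain T a (a+(n+1)) (y k) = chain T a (a+n) (T (a+n+1) (y k)) := by
        rw [show a+(n+1) = (a+n)+1 by ring, chain_succ T a (a+n) (by omega)]
        rfl
      by_cases hkc : k = a+n+1
      · subst hkc
        obtain ⟨N, hN⟩ := hnormnat (a+n+1)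
        have hN1 : 1 ≤ N := by
          have := hpos (a+n+1) (by omega)
          rw [hN] at this
          exact_mod_cast this
        obtain ⟨k₀, hk₀lt, hT, hk₀eq, hk₀norm⟩ := hstep (a+n+1) (by omega) N hN
        obtain ⟨k', m, hk'a, hchain, htr, hnorm, hd1, hd2⟩ := ih a k₀ (by omega)
        have hmle : (m:ℝ) ≤ ((N-1:ℕ):ℝ) := by
          have hle : ‖y k'‖ ≤ ‖y k₀‖ := by
            rw [htr, norm_trunc _ (Nat.cast_nonneg _)]
            exact min_le_right _ _
          rw [← hnorm, ← hk₀norm]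
          exact hle
        refine ⟨k', m, hk'a, ?_, ?_, hnorm, ?_, ?_⟩
        · rw [hch, hT, hchain]
        · rw [htr, hk₀eq, trunc_trunc _ _ (Nat.cast_nonneg _) (Nat.cast_nonneg _),
            min_eq_left hmle]
        · left
          rcases hd1 with h | h
          · exact h
          · have hm' : (m:ℝ) = ((N-1:ℕ):ℝ) := by rw [← hnorm, h, hk₀norm]
            have hmono := hymono a (a+n+1) (by omega)
            rw [hm', Nat.cast_sub hN1, Nat.cast_one]
            rw [hN] at hmono
            linarith
        · right
          rw [hN]
          rw [Nat.cast_sub hN1, Nat.cast_one] at hmle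
          linarith
      · have hTid : T (a+n+1) (y k) = y k := hT_id (a+n+1) k (by omega)
        obtain ⟨k', m, h1, h2, h3, h4, h5, h6⟩ := ih a k (by omega)
        exact ⟨k', m, h1, by rw [hch, hTid]; exact h2, h3, h4, h5, h6⟩
  obtain ⟨n, rfl⟩ : ∃ n, j₂ = j₁ + n := ⟨j₂ - j₁, by omega⟩
  obtain ⟨k', m, hk', hchain, htr, hnorm, hd1, hd2⟩ := MAIN n j₁ (j₁+n) le_rfl
  have hk'ne : k' ≠ j₁ + n := by omega
  have hlow : ‖y j₁‖ - 1 ≤ (m:ℝ) := hd1.resolve_right hk'ne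
  have hupp : (m:ℝ) ≤ ‖y j₁‖ := by
    rw [← hnorm]
    exact hymono k' j₁ hk'
  have hstrict : (m:ℝ) ≤ ‖y (j₁+n)‖ - 1 := hd2.resolve_left hk'ne
  have heq : chain T j₁ (j₁+n) (y (j₁+n)) = trunc (m:ℝ) (y (j₁+n)) := by
    rw [hchain, htr]
  have huniq : ∀ m' : ℕ, chain T j₁ (j₁+n) (y (j₁+n)) = trunc (m':ℝ) (y (j₁+n)) → m' = m := by
    intro m' hm'
    have hnorms : min (m':ℝ) ‖y (j₁+n)‖ = min (m:ℝ) ‖y (j₁+n)‖ := by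
      rw [← norm_trunc _ (Nat.cast_nonneg _), ← norm_trunc _ (Nat.cast_nonneg _),
        ← hm', ← heq]
    rw [min_eq_left (by linarith : (m:ℝ) ≤ ‖y (j₁+n)‖)] at hnorms
    have hmm : (m':ℝ) = (m:ℝ) := by
      rcases le_or_gt (m':ℝ) ‖y (j₁+n)‖ with h | h
      · rw [min_eq_left h] at hnorms
        exact hnorms
      · rw [min_eq_right (le_of_lt h)] at hnorms
        linarith
    exact_mod_cast hmm
  refine ⟨⟨m, heq, huniq⟩, ?_⟩
  intro m' hm'
  obtain rfl := huniq m' hm'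
  exact ⟨hlow, hupp⟩
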